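/- arXiv:2010.03025 — 5 statements merged into one kernel-verified Lean document; each statement's English description precedes it below -/
import Mathlib

section
/- Weak duality for the infinite-dimensional Eisenberg-Gale programs: if (x, u) satisfies xᵢ ∈ L^∞(Θ)₊, Σᵢ xᵢ ≤ 1 a.e., uᵢ ≤ ⟨vᵢ, xᵢ⟩ with uᵢ > 0, and (p, β) satisfies p ∈ L¹(Θ)₊, βᵢ > 0, p ≥ βᵢ vᵢ a.e. for all i, then Σᵢ Bᵢ log uᵢ ≤ ⟨p, 1⟩ − Σᵢ Bᵢ log βᵢ − C, where C = Σᵢ Bᵢ − Σᵢ Bᵢ log Bᵢ. -/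
open MeasureTheory

theorem stmt3 {Θ : Type*} [MeasurableSpace Θ] (μ : Measure Θ) [IsFiniteMeasure μ]
    (n : ℕ) (B : Fin n → ℝ) (hB : ∀ i, 0 < B i)
    (v : Fin n → Θ → ℝ) (hvint : ∀ i, Integrable (v i) μ)
    (hvnn : ∀ i, ∀ᵐ θ ∂μ, 0 ≤ v i θ)
    (x : Fin n → Θ → ℝ) (hx : ∀ i, MemLp (x i) ⊤ μ)
    (hxnn : ∀ i, ∀ᵐ θ ∂μ, 0 ≤ x i θ)
    (hsupply : ∀ᵐ θ ∂μ, ∑ i, x i θ ≤ 1)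
    (u : Fin n → ℝ) (hupos : ∀ i, 0 < u i)
    (huc : ∀ i, u i ≤ ∫ θ, v i θ * x i θ ∂μ)
    (p : Θ → ℝ) (hp : Integrable p μ) (hpnn : ∀ᵐ θ ∂μ, 0 ≤ p θ)
    (β : Fin n → ℝ) (hβ : ∀ i, 0 < β i)
    (hdom : ∀ i, ∀ᵐ θ ∂μ, β i * v i θ ≤ p θ) :
    ∑ i, B i * Real.log (u i) ≤
      (∫ θ, p θ ∂μ) - (∑ i, B i * Real.log (β i)) -
        ((∑ i, B i) - ∑ i, B i * Real.log (B i)) := by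
  -- integrability of v i * x i
  have hint : ∀ i, Integrable (fun θ => v i θ * x i θ) μ := by
    intro i
    have hbd : ∀ᵐ θ ∂μ, ‖x i θ‖ ≤ (eLpNormEssSup (x i) μ).toReal := by
      have hlt : eLpNormEssSup (x i) μ < ⊤ := by
        have := (hx i).2; rwa [eLpNorm_exponent_top] at this
      filter_upwards [ae_le_eLpNormEssSup (f := x i) (μ := μ)] with θ hθ
      have h2 := ENNReal.toReal_mono hlt.ne hθ
      simpa using h2
    exact ((hvint i).bdd_mul (c := (eLpNormEssSup (x i) μ).toReal)
      (hx i).aestronglyMeasurable hbd).congr (ae_of_all _ fun θ => mul_comm _ _)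
  -- pointwise key inequality
  have key : ∀ i, B i * Real.log (u i) ≤
      β i * u i + (B i * Real.log (B i) - B i * Real.log (β i) - B i) := by
    intro i
    have hu := hupos i; have hBi := hB i; have hβi := hβ i
    have ht : (0:ℝ) < β i * u i / B i := by positivity
    have h := Real.log_le_sub_one_of_pos ht
    rw [Real.log_div (by positivity) hBi.ne', Real.log_mul hβi.ne' hu.ne'] at h
    have h2 := mul_le_mul_of_nonneg_left h hBi.le
    have h3 : B i * (β i * u i / B i - 1) = β i * u i - B i := by field_simp
    nlinarith [h2, h3]
  -- sum of β i * ⟨v i, x i⟩ ≤ ∫ p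
  have hae : ∀ᵐ θ ∂μ, ∑ i, β i * (v i θ * x i θ) ≤ p θ := by
    have hxnn' : ∀ᵐ θ ∂μ, ∀ i, 0 ≤ x i θ := (ae_all_iff).2 hxnn
    have hdom' : ∀ᵐ θ ∂μ, ∀ i, β i * v i θ ≤ p θ := (ae_all_iff).2 hdom
    filter_upwards [hxnn', hdom', hsupply, hpnn] with θ h1 h2 h3 h4
    calc ∑ i, β i * (v i θ * x i θ) ≤ ∑ i, p θ * x i θ := by
          refine Finset.sum_le_sum fun i _ => ?_
          rw [← mul_assoc]
          exact mul_le_mul_of_nonneg_right (h2 i) (h1 i)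
      _ = p θ * ∑ i, x i θ := by rw [Finset.mul_sum]
      _ ≤ p θ * 1 := mul_le_mul_of_nonneg_left h3 h4
      _ = p θ := mul_one _
  have hsumint : Integrable (fun θ => ∑ i, β i * (v i θ * x i θ)) μ :=
    integrable_finset_sum _ (fun i _ => ((hint i).const_mul (β i)))
  have hstep : ∑ i, β i * ∫ θ, v i θ * x i θ ∂μ ≤ ∫ θ, p θ ∂μ := by
    have := integral_mono_ae hsumint hp hae
    rwa [integral_finset_sum _ (fun i _ => ((hint i).const_mul (β i))),
      Finset.sum_congr rfl (fun i _ => integral_const_mul (β i) _)] at this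
  have hβu : ∑ i, β i * u i ≤ ∫ θ, p θ ∂μ := by
    refine le_trans (Finset.sum_le_sum fun i _ => ?_) hstep
    exact mul_le_mul_of_nonneg_left (huc i) (hβ i).le
  calc ∑ i, B i * Real.log (u i)
      ≤ ∑ i, (β i * u i + (B i * Real.log (B i) - B i * Real.log (β i) - B i)) :=
        Finset.sum_le_sum fun i _ => key i
    _ = (∑ i, β i * u i) + ((∑ i, B i * Real.log (B i)) - (∑ i, B i * Real.log (β i)) - ∑ i, B i) := by
        rw [Finset.sum_add_distrib]; congr 1
        rw [← Finset.sum_sub_distrib, ← Finset.sum_sub_distrib]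
    _ ≤ _ := by linarith
end

section
/- The dual Eisenberg-Gale objective ψ(β) = ∫_Θ (maxᵢ βᵢvᵢ) dμ − Σᵢ Bᵢ log βᵢ attains its infimum over ℝⁿ with β > 0 at a unique minimizer β* > 0. -/
open MeasureTheory

/-- Pointwise maximum `θ ↦ maxᵢ βᵢ vᵢ(θ)` over a nonempty index set `Fin n`. -/
noncomputable def maxFun {Θ : Type*} (n : ℕ) (hn : 0 < n) (v : Fin n → Θ → ℝ)
    (β : Fin n → ℝ) (θ : Θ) : ℝ :=
  Finset.univ.sup' (Finset.univ_nonempty_iff.mpr (Fin.pos_iff_nonempty.mp hn))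
    (fun i => β i * v i θ)

lemma integrable_sup' {Θ : Type*} [MeasurableSpace Θ] {μ : Measure Θ} {ι : Type*}
    {s : Finset ι} (hs : s.Nonempty) (f : ι → Θ → ℝ) :
    (∀ i ∈ s, Integrable (f i) μ) →
    Integrable (fun θ => s.sup' hs (fun i => f i θ)) μ := by
  induction hs using Finset.Nonempty.cons_induction with
  | singleton a => intro hf; simpa using hf a (by simp)
  | cons a s h hs ih =>
    intro hf
    have : (fun θ => (Finset.cons a s h).sup' (Finset.cons_nonempty h) (fun i => f i θ))
        = fun θ => f a θ ⊔ s.sup' hs (fun i => f i θ) := by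
      funext θ; exact Finset.sup'_cons hs (fun i => f i θ)
    rw [this]
    exact (hf a (by simp)).sup (ih fun i hi => hf i (by simp [hi]))

lemma abs_sup'_le {ι : Type*} {s : Finset ι} (hs : s.Nonempty) (f : ι → ℝ) {C : ℝ}
    (hC : ∀ i ∈ s, |f i| ≤ C) : |s.sup' hs f| ≤ C := by
  rw [abs_le]
  obtain ⟨a, ha⟩ := hs
  constructor
  · have h1 : -C ≤ f a := neg_le_of_abs_le (hC a ha)
    exact h1.trans (Finset.le_sup' f ha)
  · exact Finset.sup'_le _ _ fun i hi => (le_abs_self _).trans (hC i hi)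

lemma log_lin_bound {a b t : ℝ} (ha : 0 < a) (hb : 0 < b) (ht : 0 < t) :
    b - b * Real.log (b / a) ≤ a * t - b * Real.log t := by
  have h := Real.log_le_sub_one_of_pos (show 0 < t * a / b by positivity)
  have hlog : Real.log (t * a / b) = Real.log t + Real.log a - Real.log b := by
    rw [Real.log_div (by positivity) hb.ne', Real.log_mul ht.ne' ha.ne']
  have hba : Real.log (b / a) = Real.log b - Real.log a := Real.log_div hb.ne' ha.ne'
  rw [hlog] at h
  have h2 : b * (Real.log t + Real.log a - Real.log b) ≤ b * (t * a / b - 1) :=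
    mul_le_mul_of_nonneg_left h hb.le
  have h3 : b * (t * a / b - 1) = a * t - b := by field_simp
  rw [h3] at h2
  rw [hba]
  nlinarith

theorem stmt5 {Θ : Type*} [MeasurableSpace Θ] (μ : Measure Θ) [IsFiniteMeasure μ]
    (n : ℕ) (hn : 0 < n) (v : Fin n → Θ → ℝ)
    (hvint : ∀ i, Integrable (v i) μ)
    (hvnn : ∀ i, ∀ᵐ θ ∂μ, 0 ≤ v i θ)
    (hvpos : ∀ i, 0 < ∫ θ, v i θ ∂μ)
    (B : Fin n → ℝ) (hB : ∀ i, 0 < B i) :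
    ∃! βs : Fin n → ℝ, (∀ i, 0 < βs i) ∧
      ∀ β : Fin n → ℝ, (∀ i, 0 < β i) →
        (∫ θ, maxFun n hn v βs θ ∂μ) - (∑ i, B i * Real.log (βs i)) ≤
          (∫ θ, maxFun n hn v β θ ∂μ) - (∑ i, B i * Real.log (β i)) := by
  classical
  have hne : (Finset.univ : Finset (Fin n)).Nonempty :=
    Finset.univ_nonempty_iff.mpr (Fin.pos_iff_nonempty.mp hn)
  set c : Fin n → ℝ := fun i => ∫ θ, v i θ ∂μ with hc_def
  have hc : ∀ i, 0 < c i := hvpos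
  have hnR : (0 : ℝ) < (n : ℝ) := Nat.cast_pos.mpr hn
  -- integrability of the max
  have hInt : ∀ β : Fin n → ℝ, Integrable (maxFun n hn v β) μ := fun β =>
    integrable_sup' hne _ (fun i _ => (hvint i).const_mul (β i))
  set I : (Fin n → ℝ) → ℝ := fun β => ∫ θ, maxFun n hn v β θ ∂μ with hI_def
  set ψ : (Fin n → ℝ) → ℝ := fun β => I β - ∑ i, B i * Real.log (β i) with hψ_def
  -- continuity of I
  have hIcont : Continuous I := by
    rw [continuous_iff_continuousAt]
    intro β₀
    apply continuousAt_of_dominated (bound := fun θ => (‖β₀‖ + 1) * ∑ i, ‖v i θ‖)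
    · filter_upwards with β using (hInt β).aestronglyMeasurable
    · filter_upwards [Metric.ball_mem_nhds β₀ one_pos] with β hβ
      filter_upwards with θ
      have hβn : ‖β‖ ≤ ‖β₀‖ + 1 := by
        have := mem_ball_iff_norm.mp hβ
        calc ‖β‖ ≤ ‖β₀‖ + ‖β - β₀‖ := by
              have := norm_sub_norm_le β β₀; linarith
          _ ≤ ‖β₀‖ + 1 := by linarith
      rw [Real.norm_eq_abs]
      apply abs_sup'_le hne
      intro i _
      rw [abs_mul]
      have h1 : |β i| ≤ ‖β₀‖ + 1 := (norm_le_pi_norm β i).trans hβn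
      have h2 : |v i θ| ≤ ∑ j, ‖v j θ‖ := by
        have := Finset.single_le_sum (f := fun j => ‖v j θ‖)
          (fun j _ => norm_nonneg _) (Finset.mem_univ i)
        simpa using this
      calc |β i| * |v i θ| ≤ (‖β₀‖ + 1) * |v i θ| :=
            mul_le_mul_of_nonneg_right h1 (abs_nonneg _)
        _ ≤ (‖β₀‖ + 1) * ∑ j, ‖v j θ‖ :=
            mul_le_mul_of_nonneg_left h2 (by positivity)
    · exact (integrable_finset_sum _ fun i _ => (hvint i).norm).const_mul _
    · filter_upwards with θ
      exact ContinuousAt.finset_sup'_apply hne fun i _ =>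
        ((continuous_apply i).continuousAt).mul continuousAt_const
  -- ψ is continuous on the positive orthant
  have hψcont : ∀ β₀ : Fin n → ℝ, (∀ i, 0 < β₀ i) → ContinuousAt ψ β₀ := by
    intro β₀ hβ₀
    apply ContinuousAt.sub hIcont.continuousAt
    have hci : ∀ i, ContinuousAt (fun β : Fin n → ℝ => B i * Real.log (β i)) β₀ := by
      intro i
      apply continuousAt_const.mul
      exact ContinuousAt.comp (x := β₀) (g := Real.log) (f := fun β : Fin n → ℝ => β i)
        (Real.continuousAt_log (hβ₀ i).ne') ((continuous_apply i).continuousAt)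
    exact tendsto_finset_sum _ fun i _ => hci i
  -- lower bound: I β ≥ β j * c j
  have hlow : ∀ (β : Fin n → ℝ) (j : Fin n), β j * c j ≤ I β := by
    intro β j
    have hpt : ∀ θ, β j * v j θ ≤ maxFun n hn v β θ := fun θ =>
      Finset.le_sup' (fun i => β i * v i θ) (Finset.mem_univ j)
    calc β j * c j = ∫ θ, β j * v j θ ∂μ := (integral_const_mul _ _).symm
      _ ≤ I β := integral_mono ((hvint j).const_mul _) (hInt β) hpt
  have hlowsum : ∀ β : Fin n → ℝ, (∑ i, β i * c i) / n ≤ I β := by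
    intro β
    rw [div_le_iff₀ hnR]
    calc ∑ i, β i * c i ≤ ∑ _i : Fin n, I β := Finset.sum_le_sum fun i _ => hlow β i
      _ = I β * n := by simp [Finset.sum_const, Finset.card_univ, mul_comm]
  -- the coordinatewise coercive functions
  set g : Fin n → ℝ → ℝ := fun i t => (c i / n) * t - B i * Real.log t with hg_def
  have hψlb : ∀ β : Fin n → ℝ, (∑ i, g i (β i)) ≤ ψ β := by
    intro β
    have : ∑ i, g i (β i) = (∑ i, β i * c i) / n - ∑ i, B i * Real.log (β i) := by
      rw [Finset.sum_div, ← Finset.sum_sub_distrib]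
      apply Finset.sum_congr rfl
      intro i _
      simp only [hg_def]
      ring
    rw [this]
    have := hlowsum β
    simp only [hψ_def]
    linarith
  set m : Fin n → ℝ := fun i => B i - B i * Real.log (B i / (c i / n)) with hm_def
  have hgm : ∀ i t, 0 < t → m i ≤ g i t := fun i t ht =>
    log_lin_bound (div_pos (hc i) hnR) (hB i) ht
  set m2 : Fin n → ℝ := fun i => B i - B i * Real.log (B i / (c i / (2 * n))) with hm2_def
  have hgm2 : ∀ i t, 0 < t → (c i / (2 * n)) * t + m2 i ≤ g i t := by
    intro i t ht
    have h := log_lin_bound (a := c i / (2 * n)) (b := B i)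
      (div_pos (hc i) (by nlinarith : (0:ℝ) < 2 * n)) (hB i) ht
    have : g i t = (c i / (2 * n)) * t + ((c i / (2 * n)) * t - B i * Real.log t) := by
      simp only [hg_def]; field_simp; ring
    rw [this]
    simp only [hm2_def]
    linarith
  have hgneg : ∀ i t, 0 < t → -(B i * Real.log t) ≤ g i t := by
    intro i t ht
    simp only [hg_def]
    have : 0 ≤ (c i / n) * t := le_of_lt (mul_pos (div_pos (hc i) hnR) ht)
    linarith
  -- sublevel set bounds
  set M : ℝ := ψ (fun _ => 1) with hM_def
  set C : ℝ := M + ∑ i, |m i| with hC_def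
  have hsubg : ∀ β : Fin n → ℝ, (∀ i, 0 < β i) → ψ β ≤ M → ∀ j, g j (β j) ≤ C := by
    intro β hβ hψβ j
    have h1 : ∑ i, g i (β i) ≤ M := (hψlb β).trans hψβ
    have h2 : g j (β j) + ∑ i ∈ Finset.univ.erase j, g i (β i) = ∑ i, g i (β i) :=
      Finset.add_sum_erase _ (fun i => g i (β i)) (Finset.mem_univ j)
    have h3 : ∑ i ∈ Finset.univ.erase j, (-(|m i|)) ≤ ∑ i ∈ Finset.univ.erase j, g i (β i) :=
      Finset.sum_le_sum fun i _ => (neg_abs_le _).trans ((hgm i _ (hβ i)))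
    have h4 : -(∑ i, |m i|) ≤ ∑ i ∈ Finset.univ.erase j, (-(|m i|)) := by
      rw [Finset.sum_neg_distrib, neg_le_neg_iff]
      exact Finset.sum_le_sum_of_subset_of_nonneg (Finset.erase_subset _ _)
        fun i _ _ => abs_nonneg _
    simp only [hC_def]
    linarith
  set ε : ℝ := min 1 (Finset.univ.inf' hne fun j => Real.exp (-C / B j)) with hε_def
  set R : ℝ := max 1 (Finset.univ.sup' hne fun j => (C - m2 j) / (c j / (2 * n))) with hR_def
  have hε_pos : 0 < ε := by
    apply lt_min one_pos
    rw [Finset.lt_inf'_iff]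
    exact fun j _ => Real.exp_pos _
  have hε1 : ε ≤ 1 := min_le_left _ _
  have h1R : (1 : ℝ) ≤ R := le_max_left _ _
  have hsub : ∀ β : Fin n → ℝ, (∀ i, 0 < β i) → ψ β ≤ M → ∀ j, ε ≤ β j ∧ β j ≤ R := by
    intro β hβ hψβ j
    have hgj := hsubg β hβ hψβ j
    constructor
    · have h5 : -(B j * Real.log (β j)) ≤ C := (hgneg j _ (hβ j)).trans hgj
      have h6 : -C / B j ≤ Real.log (β j) := by
        rw [div_le_iff₀ (hB j)]
        nlinarith
      have := Real.exp_le_exp.mpr h6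
      rw [Real.exp_log (hβ j)] at this
      calc ε ≤ Finset.univ.inf' hne fun j => Real.exp (-C / B j) := min_le_right _ _
        _ ≤ Real.exp (-C / B j) := Finset.inf'_le _ (Finset.mem_univ j)
        _ ≤ β j := this
    · have h5 : (c j / (2 * n)) * β j + m2 j ≤ C := (hgm2 j _ (hβ j)).trans hgj
      have h6 : β j ≤ (C - m2 j) / (c j / (2 * n)) := by
        rw [le_div_iff₀ (div_pos (hc j) (by nlinarith : (0:ℝ) < 2 * n))]
        nlinarith
      calc β j ≤ (C - m2 j) / (c j / (2 * n)) := h6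
        _ ≤ Finset.univ.sup' hne fun j => (C - m2 j) / (c j / (2 * n)) :=
            Finset.le_sup' (fun j => (C - m2 j) / (c j / (2 * (n:ℝ)))) (Finset.mem_univ j)
        _ ≤ R := le_max_right _ _
  -- minimize over the compact box
  set K : Set (Fin n → ℝ) := Set.Icc (fun _ => ε) (fun _ => R) with hK_def
  have hKc : IsCompact K := isCompact_Icc
  have hKpos : ∀ β ∈ K, ∀ i, 0 < β i := by
    intro β hβ i
    exact lt_of_lt_of_le hε_pos (hβ.1 i)
  have h1K : (fun _ => (1:ℝ)) ∈ K := ⟨fun i => hε1, fun i => h1R⟩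
  have hψconK : ContinuousOn ψ K := fun β hβ =>
    (hψcont β (hKpos β hβ)).continuousWithinAt
  obtain ⟨βs, hβsK, hβsmin⟩ := hKc.exists_isMinOn ⟨_, h1K⟩ hψconK
  have hβspos : ∀ i, 0 < βs i := hKpos βs hβsK
  have hβsM : ψ βs ≤ M := hβsmin h1K
  have hglobal : ∀ β : Fin n → ℝ, (∀ i, 0 < β i) → ψ βs ≤ ψ β := by
    intro β hβ
    by_cases hb : ψ β ≤ M
    · exact hβsmin ⟨fun j => (hsub β hβ hb j).1, fun j => (hsub β hβ hb j).2⟩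
    · exact hβsM.trans (le_of_not_ge hb)
  -- uniqueness via strict convexity
  have huniq : ∀ y : Fin n → ℝ, ((∀ i, 0 < y i) ∧ ∀ β : Fin n → ℝ, (∀ i, 0 < β i) →
      ψ y ≤ ψ β) → y = βs := by
    intro y ⟨hy, hymin⟩
    by_contra hne'
    obtain ⟨j, hj⟩ : ∃ j, y j ≠ βs j := by
      by_contra h
      push_neg at h
      exact hne' (funext h)
    set mid : Fin n → ℝ := fun i => (y i + βs i) / 2 with hmid_def
    have hmidpos : ∀ i, 0 < mid i := fun i => by
      simp only [hmid_def]; have := hy i; have := hβspos i; positivity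
    have hIconv : I mid ≤ (I y + I βs) / 2 := by
      have hpt : ∀ θ, maxFun n hn v mid θ ≤ (maxFun n hn v y θ + maxFun n hn v βs θ) / 2 := by
        intro θ
        apply Finset.sup'_le
        intro i _
        have h1 : y i * v i θ ≤ maxFun n hn v y θ :=
          Finset.le_sup' (fun k => y k * v k θ) (Finset.mem_univ i)
        have h2 : βs i * v i θ ≤ maxFun n hn v βs θ :=
          Finset.le_sup' (fun k => βs k * v k θ) (Finset.mem_univ i)
        have : mid i * v i θ = (y i * v i θ + βs i * v i θ) / 2 := by
          simp only [hmid_def]; ring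
        rw [this]
        linarith
      calc I mid ≤ ∫ θ, (maxFun n hn v y θ + maxFun n hn v βs θ) / 2 ∂μ :=
            integral_mono (hInt mid) (((hInt y).add (hInt βs)).div_const 2) hpt
        _ = (I y + I βs) / 2 := by
            rw [integral_div, integral_add (hInt y) (hInt βs)]
    have hlogconv : (∑ i, B i * Real.log (y i) + ∑ i, B i * Real.log (βs i)) / 2
        < ∑ i, B i * Real.log (mid i) := by
      rw [div_lt_iff₀ (by norm_num : (0:ℝ) < 2)]
      rw [← Finset.sum_add_distrib]
      have : (∑ i, B i * Real.log (mid i)) * 2 =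
          ∑ i, (B i * Real.log (mid i)) * 2 := by rw [Finset.sum_mul]
      rw [this]
      apply Finset.sum_lt_sum
      · intro i _
        rcases eq_or_ne (y i) (βs i) with h | h
        · have : mid i = y i := by simp only [hmid_def, h]; ring
          rw [this, h]; ring_nf; exact le_refl _
        · have hs := strictConcaveOn_log_Ioi.2 (Set.mem_Ioi.mpr (hy i))
            (Set.mem_Ioi.mpr (hβspos i)) h (by norm_num : (0:ℝ) < 1/2)
            (by norm_num : (0:ℝ) < 1/2) (by norm_num)
          simp only [smul_eq_mul] at hs
          have hm : mid i = 1/2 * y i + 1/2 * βs i := by simp only [hmid_def]; ring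
          rw [hm]
          nlinarith [hB i, hs]
      · refine ⟨j, Finset.mem_univ j, ?_⟩
        have hs := strictConcaveOn_log_Ioi.2 (Set.mem_Ioi.mpr (hy j))
          (Set.mem_Ioi.mpr (hβspos j)) hj (by norm_num : (0:ℝ) < 1/2)
          (by norm_num : (0:ℝ) < 1/2) (by norm_num)
        simp only [smul_eq_mul] at hs
        have hm : mid j = 1/2 * y j + 1/2 * βs j := by simp only [hmid_def]; ring
        rw [hm]
        nlinarith [hB j, hs]
    have hψeq : ψ y = ψ βs := le_antisymm (hymin βs hβspos) (hglobal y hy)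
    have hψmid : ψ mid < ψ y := by
      have : ψ mid = I mid - ∑ i, B i * Real.log (mid i) := rfl
      have h2 : ψ y = I y - ∑ i, B i * Real.log (y i) := rfl
      have h3 : ψ βs = I βs - ∑ i, B i * Real.log (βs i) := rfl
      have := hψeq
      simp only [hψ_def] at this ⊢
      linarith
    exact absurd (hymin mid hmidpos) (not_le.mpr hψmid)
  exact ⟨βs, ⟨hβspos, fun β hβ => hglobal β hβ⟩, huniq⟩
end

section
/- Every market equilibrium allocation is Pareto optimal: if (x*, p*) is a market equilibrium, there is no feasible allocation x̃ (x̃ᵢ ∈ L^∞(Θ)₊, Σᵢ x̃ᵢ ≤ 1 a.e.) with ⟨vᵢ, x̃ᵢ⟩ ≥ ⟨vᵢ, x*ᵢ⟩ for all i and strict inequality for some i. -/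
open MeasureTheory

lemma memℒp_top_ae_bound {Θ : Type*} [MeasurableSpace Θ] {μ : Measure Θ} {g : Θ → ℝ}
    (hg : MemLp g ⊤ μ) : ∃ C : ℝ, ∀ᵐ θ ∂μ, ‖g θ‖ ≤ C := by
  refine ⟨(eLpNormEssSup g μ).toReal, ?_⟩
  have h2 := hg.2
  rw [eLpNorm_exponent_top] at h2
  filter_upwards [ae_le_eLpNormEssSup (f := g) (μ := μ)] with θ hθ
  simpa using ENNReal.toReal_mono h2.ne hθ

lemma integrable_mul_memℒp_top {Θ : Type*} [MeasurableSpace Θ] {μ : Measure Θ}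
    {f g : Θ → ℝ} (hf : Integrable f μ) (hg : MemLp g ⊤ μ) :
    Integrable (fun θ => f θ * g θ) μ := by
  obtain ⟨C, hC⟩ := memℒp_top_ae_bound hg
  have := hf.bdd_mul hg.aestronglyMeasurable hC
  exact this.congr (Filter.Eventually.of_forall fun θ => mul_comm _ _)

theorem stmt9 {Θ : Type*} [MeasurableSpace Θ] (μ : Measure Θ) [IsFiniteMeasure μ]
    (n : ℕ) (B : Fin n → ℝ) (hB : ∀ i, 0 < B i)
    (v : Fin n → Θ → ℝ) (hvint : ∀ i, Integrable (v i) μ)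
    (hvnn : ∀ i, ∀ᵐ θ ∂μ, 0 ≤ v i θ)
    (x : Fin n → Θ → ℝ) (p : Θ → ℝ)
    (hx : ∀ i, MemLp (x i) ⊤ μ) (hxnn : ∀ i, ∀ᵐ θ ∂μ, 0 ≤ x i θ)
    (hp : Integrable p μ) (hpnn : ∀ᵐ θ ∂μ, 0 ≤ p θ)
    -- buyer optimality
    (hfeas : ∀ i, (∫ θ, p θ * x i θ ∂μ) ≤ B i)
    (hopt : ∀ i, ∀ y : Θ → ℝ, MemLp y ⊤ μ → (∀ᵐ θ ∂μ, 0 ≤ y θ) →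
      (∫ θ, p θ * y θ ∂μ) ≤ B i →
      (∫ θ, v i θ * y θ ∂μ) ≤ ∫ θ, v i θ * x i θ ∂μ)
    -- market clearance
    (hsupply : ∀ᵐ θ ∂μ, ∑ i, x i θ ≤ 1)
    (hclear : (∫ θ, p θ * (1 - ∑ i, x i θ) ∂μ) = 0)
    -- positive equilibrium utilities
    (hupos : ∀ i, 0 < ∫ θ, v i θ * x i θ ∂μ) :
    ¬ ∃ y : Fin n → Θ → ℝ,
      (∀ i, MemLp (y i) ⊤ μ) ∧ (∀ i, ∀ᵐ θ ∂μ, 0 ≤ y i θ) ∧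
      (∀ᵐ θ ∂μ, ∑ i, y i θ ≤ 1) ∧
      (∀ i, (∫ θ, v i θ * x i θ ∂μ) ≤ ∫ θ, v i θ * y i θ ∂μ) ∧
      (∃ i, (∫ θ, v i θ * x i θ ∂μ) < ∫ θ, v i θ * y i θ ∂μ) := by
  rintro ⟨y, hy, hynn, hysup, hyge, i₀, hi₀⟩
  -- integrability of p * y i and p * x i
  have hpy : ∀ i, Integrable (fun θ => p θ * y i θ) μ := fun i =>
    integrable_mul_memℒp_top hp (hy i)
  have hpx : ∀ i, Integrable (fun θ => p θ * x i θ) μ := fun i =>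
    integrable_mul_memℒp_top hp (hx i)
  -- each buyer spends at least B i under y
  have hcost : ∀ i, B i ≤ ∫ θ, p θ * y i θ ∂μ := by
    intro i
    by_contra hlt
    push_neg at hlt
    set c := ∫ θ, p θ * y i θ ∂μ with hc
    have hc0 : 0 ≤ c := by
      apply integral_nonneg_of_ae
      filter_upwards [hpnn, hynn i] with θ h1 h2
      exact mul_nonneg h1 h2
    set t : ℝ := B i / max c (B i / 2) with ht
    have hmaxpos : 0 < max c (B i / 2) := lt_max_of_lt_right (by linarith [hB i])
    have hmaxlt : max c (B i / 2) < B i := max_lt hlt (by linarith [hB i])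
    have ht1 : 1 < t := (one_lt_div hmaxpos).mpr hmaxlt
    -- t • y i is affordable
    have htc : t * c ≤ B i := by
      rw [ht, div_mul_eq_mul_div, div_le_iff₀ hmaxpos]
      exact mul_le_mul_of_nonneg_left (le_max_left _ _) (hB i).le
    have hmem : MemLp (fun θ => t * y i θ) ⊤ μ := (hy i).const_mul t
    have hnn : ∀ᵐ θ ∂μ, 0 ≤ t * y i θ := by
      filter_upwards [hynn i] with θ h
      exact mul_nonneg (by linarith) h
    have hafford : (∫ θ, p θ * (t * y i θ) ∂μ) ≤ B i := by
      have : (∫ θ, p θ * (t * y i θ) ∂μ) = t * c := by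
        rw [hc, ← integral_const_mul t _]
        congr 1; ext θ; ring
      linarith [htc, this.le, this.ge]
    have hkey := hopt i _ hmem hnn hafford
    have hvy : (∫ θ, v i θ * (t * y i θ) ∂μ) = t * ∫ θ, v i θ * y i θ ∂μ := by
      rw [← integral_const_mul t _]
      congr 1; ext θ; ring
    rw [hvy] at hkey
    have h1 : (∫ θ, v i θ * x i θ ∂μ) ≤ ∫ θ, v i θ * y i θ ∂μ := hyge i
    nlinarith [hupos i]
  -- the strict improver spends strictly more than B i₀
  have hcost₀ : B i₀ < ∫ θ, p θ * y i₀ θ ∂μ := by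
    by_contra hle
    push_neg at hle
    exact absurd (hopt i₀ _ (hy i₀) (hynn i₀) hle) (not_le.mpr hi₀)
  -- total spending under y exceeds total budget
  have hsumlt : ∑ i, B i < ∑ i, ∫ θ, p θ * y i θ ∂μ :=
    Finset.sum_lt_sum (fun i _ => hcost i) ⟨i₀, Finset.mem_univ _, hcost₀⟩
  -- but total spending under y is at most ∫ p
  have hsum_eq : (∑ i, ∫ θ, p θ * y i θ ∂μ) = ∫ θ, ∑ i, p θ * y i θ ∂μ :=
    (integral_finset_sum _ fun i _ => hpy i).symm
  have hle_p : (∫ θ, ∑ i, p θ * y i θ ∂μ) ≤ ∫ θ, p θ ∂μ := by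
    apply integral_mono_ae (integrable_finset_sum _ fun i _ => hpy i) hp
    filter_upwards [hpnn, hysup] with θ h1 h2
    calc (∑ i, p θ * y i θ) = p θ * ∑ i, y i θ := by rw [Finset.mul_sum]
      _ ≤ p θ * 1 := mul_le_mul_of_nonneg_left h2 h1
      _ = p θ := mul_one _
  -- ∫ p = total spending under x ≤ ∑ B
  have hpx_sum : Integrable (fun θ => ∑ i, p θ * x i θ) μ :=
    integrable_finset_sum _ fun i _ => hpx i
  have hclear' : (∫ θ, p θ ∂μ) = ∫ θ, ∑ i, p θ * x i θ ∂μ := by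
    have heq : (fun θ => p θ * (1 - ∑ i, x i θ)) =
        fun θ => p θ - ∑ i, p θ * x i θ := by
      ext θ; rw [mul_sub, mul_one, Finset.mul_sum]
    rw [heq] at hclear
    rw [integral_sub hp hpx_sum] at hclear
    linarith
  have hfinal : (∫ θ, ∑ i, p θ * x i θ ∂μ) ≤ ∑ i, B i := by
    rw [integral_finset_sum _ fun i _ => hpx i]
    exact Finset.sum_le_sum fun i _ => hfeas i
  linarith [hsumlt, hsum_eq.le, hsum_eq.ge, hle_p, hclear'.le, hclear'.ge, hfinal]
end

section
/- For n = 2 buyers with normalized nonnegative linear valuations vᵢ(θ) = cᵢθ + dᵢ on [0,1] (cᵢ/2 + dᵢ = 1, d₁ ≥ d₂), a utility vector (u₁, u₂) with u₁, u₂ ≥ 0 is feasible (achievable by a nonnegative allocation x₁ + x₂ ≤ 1 a.e.) if and only if there exists a ∈ [0,1] with u₁ ≤ (c₁/2)a² + d₁a and u₂ ≤ (c₂/2)(1 − a²) + d₂(1 − a). -/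
open MeasureTheory

lemma L1' (c d a b : ℝ) (h : a ≤ b) :
    ∫ θ in Set.Ioc a b, (c * θ + d) = c/2*(b^2-a^2) + d*(b-a) := by
  rw [← intervalIntegral.integral_of_le h]
  rw [intervalIntegral.integral_add (by apply IntervalIntegrable.const_mul; exact intervalIntegral.intervalIntegrable_id) intervalIntegrable_const]
  rw [intervalIntegral.integral_const_mul, integral_id, intervalIntegral.integral_const]
  simp [smul_eq_mul]; ring

lemma L1 (c d a b : ℝ) (h : a ≤ b) :
    ∫ θ in Set.Icc a b, (c * θ + d) = c/2*(b^2-a^2) + d*(b-a) := by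
  rw [MeasureTheory.integral_Icc_eq_integral_Ioc]; exact L1' c d a b h

lemma L2 (c d : ℝ) (x : ℝ → ℝ) (hx : Measurable x)
    (hbd : ∀ᵐ θ ∂(volume.restrict (Set.Icc (0:ℝ) 1)), |x θ| ≤ 1) :
    Integrable (fun θ => (c*θ+d)*x θ) (volume.restrict (Set.Icc (0:ℝ) 1)) := by
  apply Integrable.mono' (g := fun _ => (|c|+|d|)) (integrable_const _)
  · exact (((measurable_id.const_mul c).add_const d).mul hx).aestronglyMeasurable
  · filter_upwards [hbd, ae_restrict_mem measurableSet_Icc] with θ h1 h2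
    have : |c*θ+d| ≤ |c| + |d| := by
      calc |c*θ+d| ≤ |c*θ| + |d| := abs_add_le _ _
      _ ≤ |c| + |d| := by
        rw [abs_mul]
        have : |θ| ≤ 1 := abs_le.mpr ⟨by linarith [h2.1], h2.2⟩
        nlinarith [abs_nonneg c, abs_nonneg d]
    calc ‖(c*θ+d)*x θ‖ = |c*θ+d| * |x θ| := abs_mul _ _
    _ ≤ (|c|+|d|) * 1 := by apply mul_le_mul this h1 (abs_nonneg _) (by positivity)
    _ = |c|+|d| := mul_one _

lemma L2' (c d : ℝ) :
    Integrable (fun θ => (c*θ+d)) (volume.restrict (Set.Icc (0:ℝ) 1)) := by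
  have := L2 c d (fun _ => 1) measurable_const (by simp)
  simpa using this

lemma L3 (c d p q : ℝ) (hsub : Set.Icc p q ⊆ Set.Icc (0:ℝ) 1) :
    ∫ θ in Set.Icc (0:ℝ) 1, (c*θ+d) * (Set.Icc p q).indicator 1 θ
      = ∫ θ in Set.Icc p q, (c*θ+d) := by
  have : (fun θ => (c*θ+d) * (Set.Icc p q).indicator 1 θ)
      = (Set.Icc p q).indicator (fun θ => c*θ+d) := by
    funext θ
    by_cases h : θ ∈ Set.Icc p q <;> simp [Set.indicator_apply, h]
  rw [this, MeasureTheory.integral_indicator measurableSet_Icc,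
    Measure.restrict_restrict measurableSet_Icc,
    Set.inter_eq_self_of_subset_left hsub]

lemma L3' (c d p q : ℝ) (hsub : Set.Ioc p q ⊆ Set.Icc (0:ℝ) 1) :
    ∫ θ in Set.Icc (0:ℝ) 1, (c*θ+d) * (Set.Ioc p q).indicator 1 θ
      = ∫ θ in Set.Ioc p q, (c*θ+d) := by
  have : (fun θ => (c*θ+d) * (Set.Ioc p q).indicator 1 θ)
      = (Set.Ioc p q).indicator (fun θ => c*θ+d) := by
    funext θ
    by_cases h : θ ∈ Set.Ioc p q <;> simp [Set.indicator_apply, h]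
  rw [this, MeasureTheory.integral_indicator measurableSet_Ioc,
    Measure.restrict_restrict measurableSet_Ioc,
    Set.inter_eq_self_of_subset_left hsub]

lemma Lind (p q : ℝ) : ∀ᵐ θ ∂(volume.restrict (Set.Icc (0:ℝ) 1)),
    |(Set.Icc p q).indicator (1:ℝ→ℝ) θ| ≤ 1 := by
  filter_upwards with θ
  by_cases hm : θ ∈ Set.Icc p q <;> simp [Set.indicator_apply, hm]

set_option maxHeartbeats 1000000 in
theorem stmt14 (c₁ c₂ d₁ d₂ : ℝ)
    (h1 : ∀ θ ∈ Set.Icc (0:ℝ) 1, 0 ≤ c₁ * θ + d₁)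
    (h2 : ∀ θ ∈ Set.Icc (0:ℝ) 1, 0 ≤ c₂ * θ + d₂)
    (hn1 : c₁ / 2 + d₁ = 1) (hn2 : c₂ / 2 + d₂ = 1)
    (hd : d₂ ≤ d₁)
    (u₁ u₂ : ℝ) (hu₁ : 0 ≤ u₁) (hu₂ : 0 ≤ u₂) :
    (∃ x₁ x₂ : ℝ → ℝ, Measurable x₁ ∧ Measurable x₂ ∧
      (∀ᵐ θ ∂(volume.restrict (Set.Icc (0:ℝ) 1)),
        0 ≤ x₁ θ ∧ 0 ≤ x₂ θ ∧ x₁ θ + x₂ θ ≤ 1) ∧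
      u₁ = (∫ θ in Set.Icc (0:ℝ) 1, (c₁ * θ + d₁) * x₁ θ) ∧
      u₂ = (∫ θ in Set.Icc (0:ℝ) 1, (c₂ * θ + d₂) * x₂ θ)) ↔
    (∃ a ∈ Set.Icc (0:ℝ) 1,
      u₁ ≤ c₁ / 2 * a ^ 2 + d₁ * a ∧
      u₂ ≤ c₂ / 2 * (1 - a ^ 2) + d₂ * (1 - a)) := by
  constructor
  · rintro ⟨x₁, x₂, m1, m2, hae, hU1, hU2⟩
    have hb1 : ∀ᵐ θ ∂(volume.restrict (Set.Icc (0:ℝ) 1)), |x₁ θ| ≤ 1 := by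
      filter_upwards [hae] with θ h; rw [abs_le]; constructor <;> linarith [h.1, h.2.1, h.2.2]
    have hb2 : ∀ᵐ θ ∂(volume.restrict (Set.Icc (0:ℝ) 1)), |x₂ θ| ≤ 1 := by
      filter_upwards [hae] with θ h; rw [abs_le]; constructor <;> linarith [h.1, h.2.1, h.2.2]
    have hi1 : Integrable (fun θ => (c₁*θ+d₁)*x₁ θ) (volume.restrict (Set.Icc (0:ℝ) 1)) :=
      L2 _ _ _ m1 hb1
    have hi2 : Integrable (fun θ => (c₂*θ+d₂)*x₂ θ) (volume.restrict (Set.Icc (0:ℝ) 1)) :=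
      L2 _ _ _ m2 hb2
    have hi12 : Integrable (fun θ => (c₁*θ+d₁)*x₂ θ) (volume.restrict (Set.Icc (0:ℝ) 1)) :=
      L2 _ _ _ m2 hb2
    have hiv1 : Integrable (fun θ => (c₁*θ+d₁)) (volume.restrict (Set.Icc (0:ℝ) 1)) := L2' _ _
    have hiv2 : Integrable (fun θ => (c₂*θ+d₂)) (volume.restrict (Set.Icc (0:ℝ) 1)) := L2' _ _
    have hIv1 : ∫ θ in Set.Icc (0:ℝ) 1, (c₁*θ+d₁) = 1 := by
      rw [L1 c₁ d₁ 0 1 zero_le_one]; nlinarith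
    have hIv2 : ∫ θ in Set.Icc (0:ℝ) 1, (c₂*θ+d₂) = 1 := by
      rw [L1 c₂ d₂ 0 1 zero_le_one]; nlinarith
    have hu2le : u₂ ≤ 1 := by
      have hmono : (∫ θ in Set.Icc (0:ℝ) 1, (c₂*θ+d₂)*x₂ θ)
          ≤ ∫ θ in Set.Icc (0:ℝ) 1, (c₂*θ+d₂) := by
        apply integral_mono_ae hi2 hiv2
        filter_upwards [hae, ae_restrict_mem measurableSet_Icc] with θ h hI
        have hv := h2 θ hI
        nlinarith [mul_le_mul_of_nonneg_left (show x₂ θ ≤ 1 by linarith [h.1, h.2.2]) hv]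
      rw [hU2]; linarith [hIv2]
    set G : ℝ → ℝ := fun a => c₂/2*(1-a^2)+d₂*(1-a) with hG
    have hGc : ContinuousOn G (Set.Icc (0:ℝ) 1) := by fun_prop
    have hmem : u₂ ∈ Set.Icc (G 1) (G 0) := by
      constructor
      · simp only [hG]; norm_num; exact hu₂
      · simp only [hG]; norm_num; linarith
    obtain ⟨a, haI, haG⟩ := intermediate_value_Icc' zero_le_one hGc hmem
    obtain ⟨ha0, ha1⟩ := haI
    refine ⟨a, ⟨ha0, ha1⟩, ?_, le_of_eq haG.symm⟩
    have hu1le : u₁ ≤ 1 := by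
      have hmono : (∫ θ in Set.Icc (0:ℝ) 1, (c₁*θ+d₁)*x₁ θ)
          ≤ ∫ θ in Set.Icc (0:ℝ) 1, (c₁*θ+d₁) := by
        apply integral_mono_ae hi1 hiv1
        filter_upwards [hae, ae_restrict_mem measurableSet_Icc] with θ h hI
        have hv := h1 θ hI
        nlinarith [mul_le_mul_of_nonneg_left (show x₁ θ ≤ 1 by linarith [h.2.1, h.2.2]) hv]
      rw [hU1]; linarith [hIv1]
    rcases eq_or_lt_of_le ha1 with rfl | ha1'
    · nlinarith
    have hsub : Set.Icc a 1 ⊆ Set.Icc (0:ℝ) 1 := Set.Icc_subset_Icc ha0 le_rfl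
    have hindm : Measurable ((Set.Icc a 1).indicator (1:ℝ→ℝ)) :=
      measurable_one.indicator measurableSet_Icc
    have hgm : Measurable (fun θ => (Set.Icc a 1).indicator (1:ℝ→ℝ) θ - x₂ θ) := hindm.sub m2
    have hgb : ∀ᵐ θ ∂(volume.restrict (Set.Icc (0:ℝ) 1)),
        |(Set.Icc a 1).indicator (1:ℝ→ℝ) θ - x₂ θ| ≤ 1 := by
      filter_upwards [hae] with θ h
      by_cases hm : θ ∈ Set.Icc a 1
      · rw [Set.indicator_of_mem hm, Pi.one_apply, abs_le]
        constructor <;> linarith [h.1, h.2.1, h.2.2]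
      · rw [Set.indicator_of_notMem hm, abs_le]
        constructor <;> linarith [h.1, h.2.1, h.2.2]
    have hig1 : Integrable (fun θ => (c₁*θ+d₁)*((Set.Icc a 1).indicator (1:ℝ→ℝ) θ - x₂ θ))
        (volume.restrict (Set.Icc (0:ℝ) 1)) := L2 _ _ _ hgm hgb
    have hig2 : Integrable (fun θ => (c₂*θ+d₂)*((Set.Icc a 1).indicator (1:ℝ→ℝ) θ - x₂ θ))
        (volume.restrict (Set.Icc (0:ℝ) 1)) := L2 _ _ _ hgm hgb
    have hiI1 : Integrable (fun θ => (c₁*θ+d₁)*((Set.Icc a 1).indicator (1:ℝ→ℝ) θ))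
        (volume.restrict (Set.Icc (0:ℝ) 1)) := L2 _ _ _ hindm (Lind a 1)
    have hiI2 : Integrable (fun θ => (c₂*θ+d₂)*((Set.Icc a 1).indicator (1:ℝ→ℝ) θ))
        (volume.restrict (Set.Icc (0:ℝ) 1)) := L2 _ _ _ hindm (Lind a 1)
    have hI2 : ∫ θ in Set.Icc (0:ℝ) 1,
        (c₂*θ+d₂)*((Set.Icc a 1).indicator (1:ℝ→ℝ) θ - x₂ θ) = 0 := by
      have he : (fun θ => (c₂*θ+d₂)*((Set.Icc a 1).indicator (1:ℝ→ℝ) θ - x₂ θ))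
          = fun θ => (c₂*θ+d₂)*((Set.Icc a 1).indicator (1:ℝ→ℝ) θ) - (c₂*θ+d₂)*x₂ θ := by
        funext θ; ring
      rw [he, integral_sub hiI2 hi2, L3 c₂ d₂ a 1 hsub, L1 c₂ d₂ a 1 ha1, ← hU2, ← haG]
      simp only [hG]; ring
    have hI1 : ∫ θ in Set.Icc (0:ℝ) 1,
        (c₁*θ+d₁)*((Set.Icc a 1).indicator (1:ℝ→ℝ) θ - x₂ θ)
        = (c₁/2*(1-a^2)+d₁*(1-a)) - ∫ θ in Set.Icc (0:ℝ) 1, (c₁*θ+d₁)*x₂ θ := by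
      have he : (fun θ => (c₁*θ+d₁)*((Set.Icc a 1).indicator (1:ℝ→ℝ) θ - x₂ θ))
          = fun θ => (c₁*θ+d₁)*((Set.Icc a 1).indicator (1:ℝ→ℝ) θ) - (c₁*θ+d₁)*x₂ θ := by
        funext θ; ring
      rw [he, integral_sub hiI1 hi12, L3 c₁ d₁ a 1 hsub, L1 c₁ d₁ a 1 ha1]
      ring
    have key : (c₂*a+d₂) * (∫ θ in Set.Icc (0:ℝ) 1,
          (c₁*θ+d₁)*((Set.Icc a 1).indicator (1:ℝ→ℝ) θ - x₂ θ))
        ≤ (c₁*a+d₁) * (∫ θ in Set.Icc (0:ℝ) 1,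
          (c₂*θ+d₂)*((Set.Icc a 1).indicator (1:ℝ→ℝ) θ - x₂ θ)) := by
      rw [← integral_const_mul, ← integral_const_mul]
      apply integral_mono_ae (hig1.const_mul _) (hig2.const_mul _)
      filter_upwards [hae, ae_restrict_mem measurableSet_Icc] with θ h hI
      have hc1 : c₁ = 2 - 2*d₁ := by linarith
      have hc2 : c₂ = 2 - 2*d₂ := by linarith
      rcases le_or_gt a θ with hth | hth
      · have hmem' : θ ∈ Set.Icc a 1 := ⟨hth, hI.2⟩
        rw [Set.indicator_of_mem hmem', Pi.one_apply]
        have hg : 0 ≤ 1 - x₂ θ := by linarith [h.1, h.2.2]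
        have hid : (c₁*a+d₁)*((c₂*θ+d₂)*(1 - x₂ θ)) - (c₂*a+d₂)*((c₁*θ+d₁)*(1 - x₂ θ))
            = ((θ-a)*(2*(d₁-d₂)))*(1 - x₂ θ) := by rw [hc1, hc2]; ring
        have hp : 0 ≤ ((θ-a)*(2*(d₁-d₂)))*(1 - x₂ θ) :=
          mul_nonneg (by nlinarith) hg
        linarith
      · have hmem' : θ ∉ Set.Icc a 1 := fun hm => absurd hm.1 (not_le.mpr hth)
        rw [Set.indicator_of_notMem hmem']
        have hid : (c₁*a+d₁)*((c₂*θ+d₂)*(0 - x₂ θ)) - (c₂*a+d₂)*((c₁*θ+d₁)*(0 - x₂ θ))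
            = ((a-θ)*(2*(d₁-d₂)))*(x₂ θ) := by rw [hc1, hc2]; ring
        have hp : 0 ≤ ((a-θ)*(2*(d₁-d₂)))*(x₂ θ) :=
          mul_nonneg (by nlinarith) h.2.1
        linarith
    rw [hI1, hI2, mul_zero] at key
    have hiv' : Integrable (fun θ => (c₁*θ+d₁) - (c₁*θ+d₁)*x₂ θ)
        (volume.restrict (Set.Icc (0:ℝ) 1)) := hiv1.sub hi12
    have hE : u₁ ≤ 1 - ∫ θ in Set.Icc (0:ℝ) 1, (c₁*θ+d₁)*x₂ θ := by
      have h' : u₁ ≤ ∫ θ in Set.Icc (0:ℝ) 1, ((c₁*θ+d₁) - (c₁*θ+d₁)*x₂ θ) := by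
        rw [hU1]
        apply integral_mono_ae hi1 hiv'
        filter_upwards [hae, ae_restrict_mem measurableSet_Icc] with θ h hI
        have hv := h1 θ hI
        nlinarith [mul_le_mul_of_nonneg_left h.2.2 hv]
      rwa [integral_sub hiv1 hi12, hIv1] at h'
    rcases lt_or_eq_of_le (h2 a ⟨ha0, ha1⟩) with hva | hva
    · have hk2 : (c₂*a+d₂) * ((c₁/2*(1-a^2)+d₁*(1-a))
          - (∫ θ in Set.Icc (0:ℝ) 1, (c₁*θ+d₁)*x₂ θ)) ≤ (c₂*a+d₂) * 0 := by
        rw [mul_zero]; exact key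
      have ht := le_of_mul_le_mul_left hk2 hva
      linarith
    · -- v₂(a) = 0 case: forces c₂ > 0, d₂ = 0, a = 0
      have hc2pos : 0 < c₂ := by
        rcases lt_trichotomy c₂ 0 with hlt | heq | hgt
        · exfalso
          have h2m := h2 ((a+1)/2) ⟨by linarith, by linarith⟩
          nlinarith [mul_pos (neg_pos.mpr hlt) (show (0:ℝ) < (1-a)/2 by linarith)]
        · exfalso; rw [heq] at hva hn2; nlinarith [hva, hn2]
        · exact hgt
      have hd20 : d₂ = 0 := by
        nlinarith [mul_nonneg hc2pos.le ha0, hva, h2 0 ⟨le_rfl, zero_le_one⟩]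
      have ha00 : a = 0 := by nlinarith [hva, hd20, hc2pos, ha0]
      subst ha00
      have hu21 : u₂ = 1 := by
        rw [← haG]; simp only [hG]; rw [hd20] at hn2 ⊢; norm_num; linarith
      have hz : ∫ θ in Set.Icc (0:ℝ) 1, ((c₂*θ+d₂) - (c₂*θ+d₂)*x₂ θ) = 0 := by
        rw [integral_sub hiv2 hi2, hIv2, ← hU2, hu21, sub_self]
      have hznn : 0 ≤ᵐ[volume.restrict (Set.Icc (0:ℝ) 1)]
          fun θ => (c₂*θ+d₂) - (c₂*θ+d₂)*x₂ θ := by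
        filter_upwards [hae, ae_restrict_mem measurableSet_Icc] with θ h hI
        have hv := h2 θ hI
        simp only [Pi.zero_apply]
        nlinarith [mul_le_mul_of_nonneg_left (show x₂ θ ≤ 1 by linarith [h.1, h.2.2]) hv]
      have hzz : (fun θ => (c₂*θ+d₂) - (c₂*θ+d₂)*x₂ θ)
          =ᵐ[volume.restrict (Set.Icc (0:ℝ) 1)] 0 :=
        (integral_eq_zero_iff_of_nonneg_ae hznn (hiv2.sub hi2)).mp hz
      have hne : ∀ᵐ θ ∂(volume.restrict (Set.Icc (0:ℝ) 1)), θ ≠ 0 := by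
        refine (ae_iff).mpr ?_
        have hs : {θ : ℝ | ¬ θ ≠ 0} = {0} := by ext θ; simp
        rw [hs, Measure.restrict_apply (measurableSet_singleton 0)]
        exact measure_mono_null Set.inter_subset_left Real.volume_singleton
      have hx10 : (fun θ => (c₁*θ+d₁)*x₁ θ) =ᵐ[volume.restrict (Set.Icc (0:ℝ) 1)] 0 := by
        filter_upwards [hae, ae_restrict_mem measurableSet_Icc, hzz, hne] with θ h hI hz0 hn0
        have hθpos : 0 < θ := lt_of_le_of_ne hI.1 (Ne.symm hn0)
        have hv2pos : 0 < c₂*θ + d₂ := by nlinarith [mul_pos hc2pos hθpos, hd20]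
        have hxx : (c₂*θ+d₂) * (1 - x₂ θ) = 0 := by
          simp only [Pi.zero_apply] at hz0
          rw [mul_sub, mul_one]; linarith [hz0]
        have hx2 : x₂ θ = 1 := by
          rcases mul_eq_zero.mp hxx with h' | h'
          · linarith
          · linarith
        have hx1 : x₁ θ = 0 := le_antisymm (by linarith [h.2.2]) h.1
        simp [hx1]
      have hu10 : u₁ = 0 := by rw [hU1, integral_congr_ae hx10]; simp
      rw [hu10]; norm_num
  · rintro ⟨a, ⟨ha0, ha1⟩, hle1, hle2⟩
    set F : ℝ := c₁/2*a^2 + d₁*a with hF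
    set Gv : ℝ := c₂/2*(1-a^2)+d₂*(1-a) with hGv
    have hFeq : ∫ θ in Set.Icc (0:ℝ) a, (c₁*θ+d₁) = F := by
      rw [L1 c₁ d₁ 0 a ha0]; simp [hF]
    have hGeq : ∫ θ in Set.Ioc a 1, (c₂*θ+d₂) = Gv := by
      rw [L1' c₂ d₂ a 1 ha1, hGv]; ring
    have hFnn : 0 ≤ F := by
      rw [← hFeq]
      apply setIntegral_nonneg measurableSet_Icc
      intro θ hθ; exact h1 θ ⟨hθ.1, le_trans hθ.2 ha1⟩
    have hGnn : 0 ≤ Gv := by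
      rw [← hGeq]
      apply setIntegral_nonneg measurableSet_Ioc
      intro θ hθ; exact h2 θ ⟨le_trans ha0 hθ.1.le, hθ.2⟩
    set t₁ : ℝ := if F = 0 then 0 else u₁ / F with ht₁
    set t₂ : ℝ := if Gv = 0 then 0 else u₂ / Gv with ht₂
    have ht₁01 : 0 ≤ t₁ ∧ t₁ ≤ 1 := by
      rw [ht₁]; split_ifs with h
      · exact ⟨le_rfl, zero_le_one⟩
      · have hFpos : 0 < F := lt_of_le_of_ne hFnn (Ne.symm h)
        exact ⟨div_nonneg hu₁ hFnn, by rw [div_le_one hFpos]; exact hle1⟩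
    have ht₂01 : 0 ≤ t₂ ∧ t₂ ≤ 1 := by
      rw [ht₂]; split_ifs with h
      · exact ⟨le_rfl, zero_le_one⟩
      · have hGpos : 0 < Gv := lt_of_le_of_ne hGnn (Ne.symm h)
        exact ⟨div_nonneg hu₂ hGnn, by rw [div_le_one hGpos]; exact hle2⟩
    have ht₁F : t₁ * F = u₁ := by
      rw [ht₁]; split_ifs with h
      · rw [h, mul_zero]; linarith [hle1, h.ge, h.le]
      · field_simp
    have ht₂G : t₂ * Gv = u₂ := by
      rw [ht₂]; split_ifs with h
      · rw [h, mul_zero]; linarith [hle2, h.ge, h.le]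
      · field_simp
    refine ⟨fun θ => t₁ * (Set.Icc (0:ℝ) a).indicator 1 θ,
            fun θ => t₂ * (Set.Ioc a 1).indicator 1 θ,
            (measurable_one.indicator measurableSet_Icc).const_mul _,
            (measurable_one.indicator measurableSet_Ioc).const_mul _,
            ?_, ?_, ?_⟩
    · filter_upwards with θ
      by_cases hm1 : θ ∈ Set.Icc (0:ℝ) a
      · have hm2 : θ ∉ Set.Ioc a 1 := fun hm => absurd hm.1 (not_lt.mpr hm1.2)
        rw [Set.indicator_of_mem hm1, Set.indicator_of_notMem hm2, Pi.one_apply,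
          mul_one, mul_zero]
        refine ⟨?_, ?_, ?_⟩ <;> linarith [ht₁01.1, ht₁01.2, ht₂01.1, ht₂01.2]
      · by_cases hm2 : θ ∈ Set.Ioc a 1
        · rw [Set.indicator_of_notMem hm1, Set.indicator_of_mem hm2, Pi.one_apply,
            mul_one, mul_zero]
          refine ⟨?_, ?_, ?_⟩ <;> linarith [ht₁01.1, ht₁01.2, ht₂01.1, ht₂01.2]
        · rw [Set.indicator_of_notMem hm1, Set.indicator_of_notMem hm2, mul_zero, mul_zero]
          refine ⟨?_, ?_, ?_⟩ <;> linarith [ht₁01.1, ht₁01.2, ht₂01.1, ht₂01.2]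
    · have he : (fun θ => (c₁*θ+d₁) * (t₁ * (Set.Icc (0:ℝ) a).indicator 1 θ))
          = fun θ => t₁ * ((c₁*θ+d₁) * (Set.Icc (0:ℝ) a).indicator 1 θ) := by
        funext θ; ring
      rw [he, integral_const_mul, L3 c₁ d₁ 0 a (Set.Icc_subset_Icc le_rfl ha1), hFeq, ht₁F]
    · have he : (fun θ => (c₂*θ+d₂) * (t₂ * (Set.Ioc a 1).indicator 1 θ))
          = fun θ => t₂ * ((c₂*θ+d₂) * (Set.Ioc a 1).indicator 1 θ) := by
        funext θ; ring
      rw [he, integral_const_mul,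
        L3' c₂ d₂ a 1 (Set.Ioc_subset_Icc_self.trans (Set.Icc_subset_Icc ha0 le_rfl)), hGeq, ht₂G]
end

section
/- In the quasilinear Fisher market, weak duality holds: if (x, u, δ) satisfies xᵢ ∈ L^∞(Θ)₊, Σᵢ xᵢ ≤ 1 a.e., 0 < uᵢ ≤ ⟨vᵢ, xᵢ⟩ + δᵢ, δᵢ ≥ 0, and (p, β) satisfies p ∈ L¹(Θ)₊, 0 < βᵢ ≤ 1, p ≥ βᵢvᵢ a.e., then Σᵢ (Bᵢ log uᵢ − δᵢ) ≤ ⟨p, 1⟩ − Σᵢ Bᵢ log βᵢ + Σᵢ Bᵢ(log Bᵢ − 1). -/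
open MeasureTheory

lemma memTop_exists_bound {Θ : Type*} [MeasurableSpace Θ] {μ : Measure Θ} {f : Θ → ℝ}
    (hf : MemLp f ⊤ μ) : ∃ c : ℝ, ∀ᵐ θ ∂μ, ‖f θ‖ ≤ c := by
  refine ⟨(eLpNormEssSup f μ).toReal, ?_⟩
  have h := ae_le_eLpNormEssSup (f := f) (μ := μ)
  have hlt : eLpNormEssSup f μ < ⊤ := by
    have := hf.eLpNorm_lt_top
    rwa [eLpNorm_exponent_top] at this
  filter_upwards [h] with θ hθ
  have : (‖f θ‖₊ : ENNReal) ≤ eLpNormEssSup f μ := hθ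
  have := ENNReal.toReal_mono hlt.ne this
  simpa using this

theorem stmt16 {Θ : Type*} [MeasurableSpace Θ] (μ : Measure Θ) [IsFiniteMeasure μ]
    (n : ℕ) (B : Fin n → ℝ) (hB : ∀ i, 0 < B i)
    (v : Fin n → Θ → ℝ) (hvint : ∀ i, Integrable (v i) μ)
    (hvnn : ∀ i, ∀ᵐ θ ∂μ, 0 ≤ v i θ)
    (x : Fin n → Θ → ℝ) (hx : ∀ i, MemLp (x i) ⊤ μ)
    (hxnn : ∀ i, ∀ᵐ θ ∂μ, 0 ≤ x i θ)
    (hsupply : ∀ᵐ θ ∂μ, ∑ i, x i θ ≤ 1)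
    (u δ : Fin n → ℝ) (hupos : ∀ i, 0 < u i) (hδ : ∀ i, 0 ≤ δ i)
    (huc : ∀ i, u i ≤ (∫ θ, v i θ * x i θ ∂μ) + δ i)
    (p : Θ → ℝ) (hp : Integrable p μ) (hpnn : ∀ᵐ θ ∂μ, 0 ≤ p θ)
    (β : Fin n → ℝ) (hβpos : ∀ i, 0 < β i) (hβle : ∀ i, β i ≤ 1)
    (hdom : ∀ i, ∀ᵐ θ ∂μ, β i * v i θ ≤ p θ) :
    ∑ i, (B i * Real.log (u i) - δ i) ≤
      (∫ θ, p θ ∂μ) - (∑ i, B i * Real.log (β i)) +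
        ∑ i, B i * (Real.log (B i) - 1) := by
  -- integrability facts
  have hpx : ∀ i, Integrable (fun θ => p θ * x i θ) μ := fun i => by
    obtain ⟨c, hc⟩ := memTop_exists_bound (hx i)
    have := hp.bdd_mul (hx i).aestronglyMeasurable hc
    simpa [mul_comm] using this
  have hvx : ∀ i, Integrable (fun θ => v i θ * x i θ) μ := fun i => by
    obtain ⟨c, hc⟩ := memTop_exists_bound (hx i)
    have := (hvint i).bdd_mul (hx i).aestronglyMeasurable hc
    simpa [mul_comm] using this
  -- step 1: B log u - β u ≤ B log B - B log β - B
  have hlog : ∀ i, B i * Real.log (u i) ≤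
      B i * Real.log (B i) - B i * Real.log (β i) - B i + β i * u i := by
    intro i
    have hb := hβpos i; have hu := hupos i; have hBi := hB i
    have ht : 0 < β i * u i / B i := by positivity
    have h1 : Real.log (β i * u i / B i) ≤ β i * u i / B i - 1 :=
      Real.log_le_sub_one_of_pos ht
    rw [Real.log_div (by positivity) hBi.ne', Real.log_mul (hβpos i).ne' (hupos i).ne'] at h1
    have h2 := mul_le_mul_of_nonneg_left h1 (hB i).le
    have hBne : B i ≠ 0 := (hB i).ne'
    have heq : B i * (β i * u i / B i - 1) = β i * u i - B i := by field_simp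
    rw [heq] at h2
    nlinarith [h2]
  -- step 2: β u ≤ ∫ β v x + δ
  have hbu : ∀ i, β i * u i ≤ (∫ θ, p θ * x i θ ∂μ) + δ i := by
    intro i
    have h1 : β i * u i ≤ β i * (∫ θ, v i θ * x i θ ∂μ) + β i * δ i := by
      have := mul_le_mul_of_nonneg_left (huc i) (hβpos i).le
      linarith [this, mul_add (β i) (∫ θ, v i θ * x i θ ∂μ) (δ i)]
    have h2 : β i * δ i ≤ δ i := by
      nlinarith [hδ i, hβle i, hβpos i]
    have h3 : β i * (∫ θ, v i θ * x i θ ∂μ) ≤ ∫ θ, p θ * x i θ ∂μ := by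
      rw [← integral_const_mul]
      refine integral_mono_ae (by simpa [mul_assoc] using (hvx i).const_mul (β i)) (hpx i) ?_
      filter_upwards [hdom i, hxnn i] with θ h1 h2
      simpa [mul_assoc] using mul_le_mul_of_nonneg_right h1 h2
    linarith
  -- step 3: ∑ ∫ p x ≤ ∫ p
  have hsum : ∑ i, (∫ θ, p θ * x i θ ∂μ) ≤ ∫ θ, p θ ∂μ := by
    rw [← integral_finset_sum _ (fun i _ => hpx i)]
    refine integral_mono_ae (integrable_finset_sum _ (fun i _ => hpx i)) hp ?_
    filter_upwards [hsupply, hpnn] with θ h1 h2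
    calc ∑ i, p θ * x i θ = p θ * ∑ i, x i θ := by rw [Finset.mul_sum]
      _ ≤ p θ * 1 := mul_le_mul_of_nonneg_left h1 h2
      _ = p θ := mul_one _
  calc ∑ i, (B i * Real.log (u i) - δ i)
      ≤ ∑ i, (B i * Real.log (B i) - B i * Real.log (β i) - B i
          + (∫ θ, p θ * x i θ ∂μ) + δ i - δ i) := by
        refine Finset.sum_le_sum fun i _ => ?_
        have := hlog i
        have := hbu i
        linarith
    _ ≤ (∫ θ, p θ ∂μ) - (∑ i, B i * Real.log (β i)) + ∑ i, B i * (Real.log (B i) - 1) := by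
        simp only [Finset.sum_sub_distrib, Finset.sum_add_distrib, mul_sub, mul_one]
        linarith [hsum]
end
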